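/- arXiv:1705.10741 — 3 statements merged into one kernel-verified Lean document; each statement's English description precedes it below -/
import Mathlib

section
/- Let H : ℝ^N → ℝ be convex, differentiable, satisfying C_H|p|^γ − K ≤ H(p) ≤ C_H|p|^γ and ∇H(p)·p − H(p) ≥ K^{-1}|p|^γ − K for all p. Then there exists C₂ > 0 (depending on C_H, γ, K) such that C₂|p|^{γ−1} − C₂^{-1} ≤ |∇H(p)| ≤ C₂^{-1}(|p|^{γ−1}+1) for all p ∈ ℝ^N. -/
open Real

/-- Convexity gradient inequality: `⟪∇H p, v⟫ ≤ H (p + v) - H p`. -/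
lemma grad_convex_ineq {N : ℕ} (H : EuclideanSpace ℝ (Fin N) → ℝ)
    (hconv : ConvexOn ℝ Set.univ H) (hdiff : Differentiable ℝ H)
    (p v : EuclideanSpace ℝ (Fin N)) :
    (inner ℝ (gradient H p) v : ℝ) ≤ H (p + v) - H p := by
  set φ : ℝ → ℝ := fun t => H (p + t • v) with hφdef
  have hφconv : ConvexOn ℝ Set.univ φ := by
    refine ⟨convex_univ, ?_⟩
    intro x _ y _ a b ha hb hab
    have hv : p + (a • x + b • y) • v = a • (p + x • v) + b • (p + y • v) := by
      have h1 : p + (a • x + b • y) • v = (a + b) • p + (a • x + b • y) • v := by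
        rw [hab, one_smul]
      rw [h1]
      simp only [smul_eq_mul]
      module
    show H (p + (a • x + b • y) • v) ≤ a • H (p + x • v) + b • H (p + y • v)
    rw [hv]
    exact hconv.2 (Set.mem_univ _) (Set.mem_univ _) ha hb hab
  have hline : HasDerivAt (fun t : ℝ => p + t • v) v 0 := by
    have h1 : HasDerivAt (fun t : ℝ => t • v) v 0 := by
      simpa using (hasDerivAt_id (0 : ℝ)).smul_const v
    simpa using h1.const_add p
  have hgrad : HasGradientAt H (gradient H p) p := (hdiff p).hasGradientAt
  have hfd : HasFDerivAt H (InnerProductSpace.toDual ℝ _ (gradient H p)) p :=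
    hasGradientAt_iff_hasFDerivAt.mp hgrad
  have hφderiv : HasDerivAt φ (inner ℝ (gradient H p) v : ℝ) 0 := by
    have hfd' : HasFDerivAt H (InnerProductSpace.toDual ℝ _ (gradient H p))
        ((fun t : ℝ => p + t • v) 0) := by simpa using hfd
    have hcomp := hfd'.comp_hasDerivAt 0 hline
    simp only [InnerProductSpace.toDual_apply_apply] at hcomp
    exact hcomp
  have hslope := hφconv.le_slope_of_hasDerivAt (Set.mem_univ (0 : ℝ))
    (Set.mem_univ (1 : ℝ)) one_pos hφderiv
  have : slope φ 0 1 = H (p + v) - H p := by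
    simp [slope_def_field, hφdef]
  linarith [hslope, this ▸ hslope]

set_option maxHeartbeats 1000000 in
theorem gradient_growth_of_convex_hamiltonian
    {N : ℕ} (hN : 1 ≤ N) (γ C_H K : ℝ) (hγ : 1 < γ) (hCH : 0 < C_H) (hK : 0 < K)
    (H : EuclideanSpace ℝ (Fin N) → ℝ)
    (hconv : ConvexOn ℝ Set.univ H)
    (hdiff : Differentiable ℝ H)
    (hH : ∀ p, C_H * ‖p‖ ^ γ - K ≤ H p ∧ H p ≤ C_H * ‖p‖ ^ γ)
    (hco : ∀ p : EuclideanSpace ℝ (Fin N),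
      (inner ℝ (gradient H p) p : ℝ) - H p ≥ K⁻¹ * ‖p‖ ^ γ - K) :
    ∃ C₂ > 0, ∀ p : EuclideanSpace ℝ (Fin N),
      C₂ * ‖p‖ ^ (γ - 1) - C₂⁻¹ ≤ ‖gradient H p‖ ∧
      ‖gradient H p‖ ≤ C₂⁻¹ * (‖p‖ ^ (γ - 1) + 1) := by
  have hγ0 : 0 < γ := by linarith
  set A : ℝ := C_H * (2 : ℝ) ^ (2 * γ) + K with hAdef
  have hApos : 0 < A := by
    have : (0:ℝ) < (2:ℝ) ^ (2*γ) := Real.rpow_pos_of_pos two_pos _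
    positivity
  set R : ℝ := max 1 ((4 * K ^ 2) ^ (1 / γ)) with hRdef
  have hR1 : (1:ℝ) ≤ R := le_max_left _ _
  have hRpos : (0:ℝ) < R := lt_of_lt_of_le one_pos hR1
  set C₂ : ℝ := min (min (2 * K)⁻¹ A⁻¹) (R ^ ((1 - γ) / 2)) with hC₂def
  have hC₂pos : 0 < C₂ := by
    refine lt_min (lt_min (by positivity) (by positivity)) ?_
    exact Real.rpow_pos_of_pos hRpos _
  refine ⟨C₂, hC₂pos, fun p => ?_⟩
  have hpnn : (0:ℝ) ≤ ‖p‖ := norm_nonneg p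
  have hX : (0:ℝ) ≤ ‖p‖ ^ (γ - 1) := Real.rpow_nonneg hpnn _
  constructor
  · -- lower bound
    by_cases hp : ‖p‖ ≤ R
    · -- small p : LHS ≤ 0
      have h1 : ‖p‖ ^ (γ - 1) ≤ R ^ (γ - 1) :=
        Real.rpow_le_rpow hpnn hp (by linarith)
      have hC₂R : C₂ ≤ R ^ ((1 - γ) / 2) := min_le_right _ _
      have hsq : C₂ * C₂ ≤ R ^ (1 - γ) := by
        have := mul_le_mul hC₂R hC₂R hC₂pos.le (Real.rpow_nonneg hRpos.le _)
        calc C₂ * C₂ ≤ R ^ ((1 - γ)/2) * R ^ ((1 - γ)/2) := this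
          _ = R ^ ((1 - γ)/2 + (1 - γ)/2) := (Real.rpow_add hRpos _ _).symm
          _ = R ^ (1 - γ) := by ring_nf
      have hmul : R ^ (1 - γ) * R ^ (γ - 1) = 1 := by
        rw [← Real.rpow_add hRpos]; norm_num
      have hkey : C₂ * C₂ * R ^ (γ - 1) ≤ 1 := by
        calc C₂ * C₂ * R ^ (γ - 1) ≤ R ^ (1 - γ) * R ^ (γ - 1) :=
              mul_le_mul_of_nonneg_right hsq (Real.rpow_nonneg hRpos.le _)
          _ = 1 := hmul
      have hinv : C₂ * C₂⁻¹ = 1 := mul_inv_cancel₀ hC₂pos.ne'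
      have hRγ : (0:ℝ) ≤ R ^ (γ - 1) := Real.rpow_nonneg hRpos.le _
      have hle : C₂ * ‖p‖ ^ (γ - 1) ≤ C₂⁻¹ := by
        have h2 : C₂ * ‖p‖ ^ (γ - 1) ≤ C₂ * R ^ (γ - 1) :=
          mul_le_mul_of_nonneg_left h1 hC₂pos.le
        nlinarith [hC₂pos]
      have := norm_nonneg (gradient H p)
      linarith
    · -- large p
      push_neg at hp
      have hppos : (0:ℝ) < ‖p‖ := lt_trans hRpos hp
      have hip : (inner ℝ (gradient H p) p : ℝ) ≤ ‖gradient H p‖ * ‖p‖ :=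
        real_inner_le_norm _ _
      have hco' := hco p
      have hHp := (hH p).1
      have hCHn : (0:ℝ) ≤ C_H * ‖p‖ ^ γ := by positivity
      -- ‖p‖ ^ γ ≥ 4 K ^ 2
      have h4K : (4 * K ^ 2 : ℝ) ≤ ‖p‖ ^ γ := by
        have hb : ((4 * K ^ 2) ^ (1 / γ) : ℝ) ≤ R := le_max_right _ _
        have hRp : R ^ γ ≤ ‖p‖ ^ γ := Real.rpow_le_rpow hRpos.le hp.le hγ0.le
        have h1 : ((4 * K ^ 2 : ℝ) ^ (1 / γ)) ^ γ ≤ R ^ γ :=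
          Real.rpow_le_rpow (Real.rpow_nonneg (by positivity) _) hb hγ0.le
        have h2 : ((4 * K ^ 2 : ℝ) ^ (1 / γ)) ^ γ = 4 * K ^ 2 := by
          rw [← Real.rpow_natCast]
          rw [← Real.rpow_mul (by positivity)]
          · simp [one_div, inv_mul_cancel₀ hγ0.ne']
        calc (4 * K ^ 2 : ℝ) = ((4 * K ^ 2 : ℝ) ^ (1 / γ)) ^ γ := h2.symm
          _ ≤ R ^ γ := h1
          _ ≤ ‖p‖ ^ γ := hRp
      have hKinv : K * K⁻¹ = 1 := mul_inv_cancel₀ hK.ne'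
      have h2Kinv : (2*K) * (2*K)⁻¹ = 1 := mul_inv_cancel₀ (by positivity)
      -- inner ≥ (2K)⁻¹ ‖p‖^γ
      have hlow : (2*K)⁻¹ * ‖p‖ ^ γ ≤ ‖gradient H p‖ * ‖p‖ := by
        have h1 : K⁻¹ * ‖p‖ ^ γ - 2*K ≤ (inner ℝ (gradient H p) p : ℝ) := by linarith
        have h2 : (2*K)⁻¹ * ‖p‖ ^ γ ≤ K⁻¹ * ‖p‖ ^ γ - 2*K := by
          nlinarith [h4K, hK, hKinv, h2Kinv]
        linarith
      have hsub : ‖p‖ ^ (γ - 1) = ‖p‖ ^ γ / ‖p‖ := by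
        rw [Real.rpow_sub hppos, Real.rpow_one]
      have hge : (2*K)⁻¹ * ‖p‖ ^ (γ - 1) ≤ ‖gradient H p‖ := by
        rw [hsub, ← mul_div_assoc, div_le_iff₀ hppos]
        linarith
      have hC₂le : C₂ ≤ (2*K)⁻¹ := le_trans (min_le_left _ _) (min_le_left _ _)
      have hC₂inv : (0:ℝ) < C₂⁻¹ := by positivity
      have : C₂ * ‖p‖ ^ (γ - 1) ≤ (2*K)⁻¹ * ‖p‖ ^ (γ - 1) :=
        mul_le_mul_of_nonneg_right hC₂le hX
      linarith
  · -- upper bound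
    have hAle : A ≤ C₂⁻¹ := by
      have h1 : C₂ ≤ A⁻¹ := le_trans (min_le_left _ _) (min_le_right _ _)
      have := (inv_le_inv₀ (by positivity) hC₂pos).mpr h1
      simpa using this
    rcases eq_or_ne (gradient H p) 0 with h0 | h0
    · rw [h0, norm_zero]
      have : (0:ℝ) < C₂⁻¹ := by positivity
      nlinarith
    · obtain ⟨g, hgeq⟩ : ∃ g, gradient H p = g := ⟨_, rfl⟩
      rw [hgeq] at h0 ⊢
      have hgpos : (0:ℝ) < ‖g‖ := norm_pos_iff.mpr h0
      set t : ℝ := (‖p‖ + 1) / ‖g‖ with htdef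
      have htpos : 0 < t := by positivity
      have key := grad_convex_ineq H hconv hdiff p (t • g)
      rw [hgeq] at key
      have hinner : (inner ℝ g (t • g) : ℝ) = (‖p‖ + 1) * ‖g‖ := by
        rw [real_inner_smul_right, real_inner_self_eq_norm_mul_norm, htdef]
        field_simp
      have htg : ‖t • g‖ = ‖p‖ + 1 := by
        rw [norm_smul, Real.norm_of_nonneg htpos.le, htdef]
        field_simp
      have hnormsum : ‖p + t • g‖ ≤ 2 * ‖p‖ + 1 := by
        calc ‖p + t • g‖ ≤ ‖p‖ + ‖t • g‖ := norm_add_le _ _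
          _ = 2 * ‖p‖ + 1 := by rw [htg]; ring
      have hHup : H (p + t • g) ≤ C_H * (2 * ‖p‖ + 1) ^ γ := by
        have := (hH (p + t • g)).2
        have hmono : ‖p + t • g‖ ^ γ ≤ (2 * ‖p‖ + 1) ^ γ :=
          Real.rpow_le_rpow (norm_nonneg _) hnormsum hγ0.le
        nlinarith
      have hHdn : C_H * ‖p‖ ^ γ - K ≤ H p := (hH p).1
      have hCHn : (0:ℝ) ≤ C_H * ‖p‖ ^ γ := by positivity
      -- (‖p‖+1) ‖g‖ ≤ C_H (2‖p‖+1)^γ + K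
      have hstep1 : (‖p‖ + 1) * ‖g‖ ≤ C_H * (2 * ‖p‖ + 1) ^ γ + K := by
        rw [← hinner]; linarith
      -- (2‖p‖+1)^γ ≤ 2^γ (‖p‖+1)^γ
      have hstep2 : (2 * ‖p‖ + 1 : ℝ) ^ γ ≤ (2:ℝ)^γ * (‖p‖ + 1) ^ γ := by
        have h1 : (2 * ‖p‖ + 1 : ℝ) ≤ 2 * (‖p‖ + 1) := by linarith
        have h2 : (2 * ‖p‖ + 1 : ℝ) ^ γ ≤ (2 * (‖p‖ + 1)) ^ γ :=
          Real.rpow_le_rpow (by linarith) h1 hγ0.le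
        rwa [Real.mul_rpow (by norm_num) (by linarith)] at h2
      have hp1pos : (0:ℝ) < ‖p‖ + 1 := by linarith
      have hdivide : (‖p‖ + 1) ^ γ / (‖p‖ + 1) = (‖p‖ + 1) ^ (γ - 1) := by
        rw [Real.rpow_sub hp1pos, Real.rpow_one]
      have hstep3 : ‖g‖ ≤ C_H * (2:ℝ)^γ * (‖p‖ + 1) ^ (γ - 1) + K := by
        have h1 : (‖p‖ + 1) * ‖g‖ ≤ C_H * ((2:ℝ)^γ * (‖p‖ + 1) ^ γ) + K := by
          have hm : C_H * (2 * ‖p‖ + 1) ^ γ ≤ C_H * ((2:ℝ)^γ * (‖p‖ + 1) ^ γ) :=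
            mul_le_mul_of_nonneg_left hstep2 hCH.le
          linarith
        have h2 : ‖g‖ ≤ (C_H * ((2:ℝ)^γ * (‖p‖ + 1) ^ γ) + K) / (‖p‖ + 1) := by
          rw [le_div_iff₀ hp1pos, mul_comm]; exact h1
        have h3 : (C_H * ((2:ℝ)^γ * (‖p‖ + 1) ^ γ) + K) / (‖p‖ + 1)
            = C_H * (2:ℝ)^γ * ((‖p‖ + 1) ^ γ / (‖p‖ + 1)) + K / (‖p‖ + 1) := by
          ring
        have h4 : K / (‖p‖ + 1) ≤ K := div_le_self hK.le (by linarith)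
        rw [h3, hdivide] at h2
        linarith
      have hstep4 : (‖p‖ + 1) ^ (γ - 1) ≤ (2:ℝ)^(γ-1) * (‖p‖ ^ (γ - 1) + 1) := by
        have h2pos : (0:ℝ) < (2:ℝ)^(γ-1) := Real.rpow_pos_of_pos two_pos _
        by_cases hp1 : ‖p‖ ≤ 1
        · have : (‖p‖ + 1) ^ (γ - 1) ≤ (2:ℝ)^(γ-1) :=
            Real.rpow_le_rpow (by linarith) (by linarith) (by linarith)
          nlinarith
        · push_neg at hp1
          have h1 : (‖p‖ + 1 : ℝ) ≤ 2 * ‖p‖ := by linarith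
          have h2 : (‖p‖ + 1) ^ (γ - 1) ≤ (2 * ‖p‖) ^ (γ - 1) :=
            Real.rpow_le_rpow (by linarith) h1 (by linarith)
          rw [Real.mul_rpow (by norm_num) hpnn] at h2
          nlinarith
      have hstep5 : (2:ℝ)^γ * (2:ℝ)^(γ-1) ≤ (2:ℝ)^(2*γ) := by
        rw [← Real.rpow_add two_pos]
        exact Real.rpow_le_rpow_of_exponent_le one_le_two (by linarith)
      have h2γpos : (0:ℝ) < (2:ℝ)^γ := Real.rpow_pos_of_pos two_pos γ
      have h2γ1pos : (0:ℝ) < (2:ℝ)^(γ-1) := Real.rpow_pos_of_pos two_pos _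
      have hfinal : ‖g‖ ≤ A * (‖p‖ ^ (γ - 1) + 1) := by
        have hXp : (0:ℝ) ≤ ‖p‖ ^ (γ - 1) + 1 := by linarith
        have h1 : C_H * (2:ℝ)^γ * (‖p‖ + 1) ^ (γ - 1)
            ≤ C_H * (2:ℝ)^γ * ((2:ℝ)^(γ-1) * (‖p‖ ^ (γ - 1) + 1)) :=
          mul_le_mul_of_nonneg_left hstep4 (by positivity)
        have h2 : C_H * (2:ℝ)^γ * ((2:ℝ)^(γ-1) * (‖p‖ ^ (γ - 1) + 1))
            = C_H * ((2:ℝ)^γ * (2:ℝ)^(γ-1)) * (‖p‖ ^ (γ - 1) + 1) := by ring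
        have h3 : C_H * ((2:ℝ)^γ * (2:ℝ)^(γ-1)) * (‖p‖ ^ (γ - 1) + 1)
            ≤ C_H * (2:ℝ)^(2*γ) * (‖p‖ ^ (γ - 1) + 1) :=
          mul_le_mul_of_nonneg_right (mul_le_mul_of_nonneg_left hstep5 hCH.le) hXp
        have h4 : K ≤ K * (‖p‖ ^ (γ - 1) + 1) := by nlinarith [hX, hK]
        have h5 : A * (‖p‖ ^ (γ - 1) + 1)
            = C_H * (2:ℝ)^(2*γ) * (‖p‖ ^ (γ - 1) + 1) + K * (‖p‖ ^ (γ - 1) + 1) := by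
          rw [hAdef]; ring
        linarith
      have hlast : A * (‖p‖ ^ (γ - 1) + 1) ≤ C₂⁻¹ * (‖p‖ ^ (γ - 1) + 1) :=
        mul_le_mul_of_nonneg_right hAle (by linarith)
      exact hfinal.trans hlast
end

section
/- Let F : [0,∞) → ℝ with F(m) = ∫_0^m f(n) dn where f satisfies −C_f m^α − K ≤ f(m) ≤ −C_f m^α + K for all m ≥ 0 (C_f, K > 0, α > 0). Let χ be a probability density on ℝ^N and m ∈ L^1(ℝ^N), m ≥ 0, ∫ m = M. Then ∫_{ℝ^N} F(m ⋆ χ)(x) dx ≥ −(C_f/(α+1)) ∫_{ℝ^N} m(x)^{α+1} dx − K M. -/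
open MeasureTheory

open scoped ENNReal Convolution

private lemma F_lower_bound {α C_f K : ℝ} (hα : 0 < α) (hCf : 0 < C_f) (hK : 0 < K)
    {f : ℝ → ℝ} (hf : ∀ s : ℝ, 0 ≤ s → -C_f * s ^ α - K ≤ f s)
    {F : ℝ → ℝ} (hF : ∀ s, F s = ∫ t in (0:ℝ)..s, f t)
    {s : ℝ} (hs : 0 ≤ s) :
    -(C_f / (α + 1)) * s ^ (α + 1) - K * s ≤ F s := by
  have hs1 : (0:ℝ) ≤ s ^ (α + 1) := Real.rpow_nonneg hs _
  have hα1 : (0:ℝ) < α + 1 := by linarith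
  have hrpow : IntervalIntegrable (fun t : ℝ => t ^ α) MeasureTheory.volume 0 s :=
    intervalIntegral.intervalIntegrable_rpow' (by linarith)
  have hlow : IntervalIntegrable (fun t : ℝ => -C_f * t ^ α - K) MeasureTheory.volume 0 s :=
    (hrpow.const_mul _).sub intervalIntegrable_const
  by_cases hint : IntervalIntegrable f MeasureTheory.volume 0 s
  · have hmono := intervalIntegral.integral_mono_on hs hlow hint
      (fun t ht => hf t ht.1)
    have hval : (∫ t in (0:ℝ)..s, (-C_f * t ^ α - K))
        = -(C_f / (α + 1)) * s ^ (α + 1) - K * s := by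
      rw [intervalIntegral.integral_sub (hrpow.const_mul _) intervalIntegrable_const,
        intervalIntegral.integral_const_mul, integral_rpow (Or.inl (by linarith : (-1:ℝ) < α)),
        intervalIntegral.integral_const, Real.zero_rpow (by positivity)]
      simp only [sub_zero, smul_eq_mul]
      ring
    rw [hF s]
    rw [hval] at hmono
    linarith
  · rw [hF s, intervalIntegral.integral_undef hint]
    have h1 : 0 ≤ C_f / (α + 1) * s ^ (α + 1) := by positivity
    have h2 : 0 ≤ K * s := by positivity
    linarith

private lemma jensen_rpow_aux {X : Type*} [MeasurableSpace X] {μ : Measure X} {p q : ℝ}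
    (hpq : p.HolderConjugate q)
    {u v : X → ℝ} (hu0 : ∀ x, 0 ≤ u x) (hv0 : ∀ x, 0 ≤ v x)
    (hum : AEMeasurable u μ) (hvm : AEMeasurable v μ)
    (hv1 : ∫⁻ x, ENNReal.ofReal (v x) ∂μ = 1)
    (huv : Integrable (fun x => u x * v x) μ)
    (hupv : Integrable (fun x => u x ^ p * v x) μ) :
    (∫ x, u x * v x ∂μ) ^ p ≤ ∫ x, u x ^ p * v x ∂μ := by
  have hp0 : (0:ℝ) ≤ p := hpq.nonneg
  have hq0 : (0:ℝ) ≤ q := hpq.symm.nonneg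
  set φ : X → ℝ≥0∞ := fun x => ENNReal.ofReal (u x) with hφ
  set ψ : X → ℝ≥0∞ := fun x => ENNReal.ofReal (v x) with hψ
  have hφm : AEMeasurable φ μ := hum.ennreal_ofReal
  have hψm : AEMeasurable ψ μ := hvm.ennreal_ofReal
  have hfm : AEMeasurable (fun x => φ x * ψ x ^ (1/p)) μ :=
    hφm.mul (hψm.pow aemeasurable_const)
  have hgm : AEMeasurable (fun x => ψ x ^ (1/q)) μ := hψm.pow aemeasurable_const
  have hH := ENNReal.lintegral_mul_le_Lp_mul_Lq μ hpq hfm hgm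
  have e1 : ∀ x, ((fun x => φ x * ψ x ^ (1/p)) * fun x => ψ x ^ (1/q)) x = φ x * ψ x := by
    intro x
    simp only [Pi.mul_apply]
    rw [mul_assoc, ← ENNReal.rpow_add_of_nonneg _ _ (by positivity) (by positivity)]
    rw [one_div, one_div, hpq.inv_add_inv_eq_one, ENNReal.rpow_one]
  have e2 : ∀ x, (φ x * ψ x ^ (1/p)) ^ p = φ x ^ p * ψ x := by
    intro x
    rw [ENNReal.mul_rpow_of_nonneg _ _ hp0, ← ENNReal.rpow_mul,
      one_div_mul_cancel hpq.ne_zero, ENNReal.rpow_one]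
  have e3 : ∀ x, ((fun x => ψ x ^ (1/q)) x) ^ q = ψ x := by
    intro x
    rw [← ENNReal.rpow_mul, one_div_mul_cancel hpq.symm.ne_zero, ENNReal.rpow_one]
  simp only [e1] at hH
  have hH2 : (∫⁻ x, φ x * ψ x ∂μ) ≤ (∫⁻ x, φ x ^ p * ψ x ∂μ) ^ (1/p) := by
    calc (∫⁻ x, φ x * ψ x ∂μ)
        ≤ (∫⁻ x, (φ x * ψ x ^ (1/p)) ^ p ∂μ) ^ (1/p)
            * (∫⁻ x, ((fun x => ψ x ^ (1/q)) x) ^ q ∂μ) ^ (1/q) := hH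
      _ = (∫⁻ x, φ x ^ p * ψ x ∂μ) ^ (1/p) * (∫⁻ x, ψ x ∂μ) ^ (1/q) := by
            simp only [e2, e3]
      _ = (∫⁻ x, φ x ^ p * ψ x ∂μ) ^ (1/p) := by rw [hv1, ENNReal.one_rpow, mul_one]
  have hH3 : (∫⁻ x, φ x * ψ x ∂μ) ^ p ≤ ∫⁻ x, φ x ^ p * ψ x ∂μ := by
    calc (∫⁻ x, φ x * ψ x ∂μ) ^ p
        ≤ ((∫⁻ x, φ x ^ p * ψ x ∂μ) ^ (1/p)) ^ p := ENNReal.rpow_le_rpow hH2 hp0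
      _ = ∫⁻ x, φ x ^ p * ψ x ∂μ := by
          rw [← ENNReal.rpow_mul, one_div_mul_cancel hpq.ne_zero, ENNReal.rpow_one]
  have hA : ENNReal.ofReal (∫ x, u x * v x ∂μ) = ∫⁻ x, φ x * ψ x ∂μ := by
    rw [ofReal_integral_eq_lintegral_ofReal huv
      (Filter.Eventually.of_forall fun x => mul_nonneg (hu0 x) (hv0 x))]
    congr 1
    funext x
    rw [ENNReal.ofReal_mul (hu0 x)]
  have hB : ENNReal.ofReal (∫ x, u x ^ p * v x ∂μ) = ∫⁻ x, φ x ^ p * ψ x ∂μ := by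
    rw [ofReal_integral_eq_lintegral_ofReal hupv
      (Filter.Eventually.of_forall fun x => mul_nonneg (Real.rpow_nonneg (hu0 x) _) (hv0 x))]
    congr 1
    funext x
    rw [ENNReal.ofReal_mul (Real.rpow_nonneg (hu0 x) _),
      ← ENNReal.ofReal_rpow_of_nonneg (hu0 x) hp0]
  have hIuv : 0 ≤ ∫ x, u x * v x ∂μ :=
    integral_nonneg fun x => mul_nonneg (hu0 x) (hv0 x)
  have hIupv : 0 ≤ ∫ x, u x ^ p * v x ∂μ :=
    integral_nonneg fun x => mul_nonneg (Real.rpow_nonneg (hu0 x) _) (hv0 x)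
  have hfinal : ENNReal.ofReal ((∫ x, u x * v x ∂μ) ^ p)
      ≤ ENNReal.ofReal (∫ x, u x ^ p * v x ∂μ) := by
    rw [← ENNReal.ofReal_rpow_of_nonneg hIuv hp0, hA, hB]
    exact hH3
  exact (ENNReal.ofReal_le_ofReal_iff hIupv).mp hfinal

set_option maxHeartbeats 1000000 in
theorem regularized_coupling_energy_lower_bound
    {N : ℕ} (hN : 1 ≤ N) (α C_f K M : ℝ)
    (hα : 0 < α) (hCf : 0 < C_f) (hK : 0 < K) (hM : 0 < M)
    (f : ℝ → ℝ)
    (hf : ∀ s : ℝ, 0 ≤ s → -C_f * s ^ α - K ≤ f s ∧ f s ≤ -C_f * s ^ α + K)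
    (F : ℝ → ℝ) (hF : ∀ s, F s = ∫ t in (0:ℝ)..s, f t)
    (χ : EuclideanSpace ℝ (Fin N) → ℝ)
    (hχInt : Integrable χ) (hχ0 : ∀ x, 0 ≤ χ x) (hχ1 : ∫ x, χ x = 1)
    (m : EuclideanSpace ℝ (Fin N) → ℝ)
    (hmInt : Integrable m) (hm0 : ∀ x, 0 ≤ m x) (hmM : ∫ x, m x = M)
    (hmα : Integrable (fun x => m x ^ (α + 1)))
    (hFconv : Integrable (fun x => F (∫ y, m y * χ (x - y)))) :
    ∫ x, F (∫ y, m y * χ (x - y)) ≥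
      -(C_f / (α + 1)) * (∫ x, m x ^ (α + 1)) - K * M := by
  have hp1 : 1 < α + 1 := by linarith
  have hpq : (α + 1).HolderConjugate ((α+1) / (α+1-1)) :=
    Real.HolderConjugate.conjExponent hp1
  set L : ℝ →L[ℝ] ℝ →L[ℝ] ℝ := ContinuousLinearMap.mul ℝ ℝ with hL
  set g : EuclideanSpace ℝ (Fin N) → ℝ := fun x => ∫ y, m y * χ (x - y) with hg
  set h : EuclideanSpace ℝ (Fin N) → ℝ := fun x => ∫ y, m y ^ (α+1) * χ (x - y) with hh
  have hconv_g : g = m ⋆[L, volume] χ := by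
    funext x
    rw [convolution_def]
    simp [hL, hg]
  have hconv_h : h = (fun y => m y ^ (α+1)) ⋆[L, volume] χ := by
    funext x
    rw [convolution_def]
    simp [hL, hh]
  have hgInt : Integrable g := by
    rw [hconv_g]; exact hmInt.integrable_convolution L hχInt
  have hhInt : Integrable h := by
    rw [hconv_h]; exact hmα.integrable_convolution L hχInt
  have hgVal : ∫ x, g x = M := by
    rw [hconv_g, integral_convolution L hmInt hχInt, hmM, hχ1]
    simp [hL]
  have hhVal : ∫ x, h x = ∫ x, m x ^ (α+1) := by
    rw [hconv_h, integral_convolution L hmα hχInt, hχ1]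
    simp [hL]
  have hg0 : ∀ x, 0 ≤ g x := fun x =>
    integral_nonneg fun y => mul_nonneg (hm0 y) (hχ0 _)
  have hvx : ∀ x : EuclideanSpace ℝ (Fin N),
      AEMeasurable (fun y => χ (x - y)) volume := fun x =>
    hχInt.aemeasurable.comp_quasiMeasurePreserving
      (Measure.measurePreserving_sub_left volume x).quasiMeasurePreserving
  have hv1 : ∀ x : EuclideanSpace ℝ (Fin N),
      ∫⁻ y, ENNReal.ofReal (χ (x - y)) = 1 := by
    intro x
    have heq : (∫⁻ y, ENNReal.ofReal (χ (x - y)))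
        = ∫⁻ y, ENNReal.ofReal (χ y) := by
      have := (Measure.measurePreserving_sub_left volume x).lintegral_comp_emb
        (MeasurableEquiv.subLeft x).measurableEmbedding
        (fun y => ENNReal.ofReal (χ y))
      simpa using this
    rw [heq, ← ofReal_integral_eq_lintegral_ofReal hχInt
      (Filter.Eventually.of_forall hχ0), hχ1, ENNReal.ofReal_one]
  have hae1 : ∀ᵐ x, Integrable (fun y => m y * χ (x - y)) := by
    have := hmInt.ae_convolution_exists L hχInt
    filter_upwards [this] with x hx
    simpa [ConvolutionExistsAt, hL] using hx
  have hae2 : ∀ᵐ x, Integrable (fun y => m y ^ (α+1) * χ (x - y)) := by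
    have := hmα.ae_convolution_exists L hχInt
    filter_upwards [this] with x hx
    simpa [ConvolutionExistsAt, hL] using hx
  have key : ∀ᵐ x, -(C_f / (α+1)) * h x - K * g x ≤ F (g x) := by
    filter_upwards [hae1, hae2] with x hx1 hx2
    have hjen : g x ^ (α+1) ≤ h x := by
      rw [hg, hh]
      exact jensen_rpow_aux hpq hm0 (fun y => hχ0 _) hmInt.aemeasurable (hvx x)
        (hv1 x) hx1 hx2
    have hFb : -(C_f / (α+1)) * g x ^ (α+1) - K * g x ≤ F (g x) :=
      F_lower_bound hα hCf hK (fun s hs => (hf s hs).1) hF (hg0 x)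
    have hc : 0 ≤ C_f / (α+1) := by positivity
    have hmul := mul_le_mul_of_nonneg_left hjen hc
    linarith
  have hlhsInt : Integrable (fun x => -(C_f / (α+1)) * h x - K * g x) :=
    (hhInt.const_mul _).sub (hgInt.const_mul _)
  have hmono := integral_mono_ae hlhsInt hFconv key
  have hval : (∫ x, (-(C_f / (α+1)) * h x - K * g x))
      = -(C_f / (α+1)) * (∫ x, m x ^ (α+1)) - K * M := by
    rw [integral_sub (hhInt.const_mul _) (hgInt.const_mul _),
      integral_const_mul, integral_const_mul, hgVal, hhVal]
  rw [hval] at hmono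
  exact hmono
end

section
/- Let f_n → f almost everywhere on ℝ^N with ‖f_n‖_{L^p} ≤ C for all n and some p ∈ [1, ∞). Then lim_n (‖f_n‖_{L^p}^p − ‖f_n − f‖_{L^p}^p) = ‖f‖_{L^p}^p. -/
open MeasureTheory Filter

/-- Young-type inequality: `(t+s)^p ≤ (1+ε) t^p + K s^p`. -/
lemma BL.add_rpow_le {p ε : ℝ} (hp : 1 ≤ p) (hε : 0 < ε) :
    ∃ K : ℝ, 0 ≤ K ∧ ∀ t s : ℝ, 0 ≤ t → 0 ≤ s →
      (t + s) ^ p ≤ (1 + ε) * t ^ p + K * s ^ p := by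
  have hp0 : (0:ℝ) < p := lt_of_lt_of_le one_pos hp
  set δ := Real.log (1 + ε) / p with hδdef
  have hlog : 0 < Real.log (1 + ε) := Real.log_pos (by linarith)
  have hδ : 0 < δ := div_pos hlog hp0
  refine ⟨(1/δ + 1) ^ p, Real.rpow_nonneg (by positivity) p, fun t s ht hs => ?_⟩
  rcases le_or_gt s (δ * t) with hc | hc
  · have h1 : (t + s) ^ p ≤ ((1+δ)*t) ^ p :=
      Real.rpow_le_rpow (by linarith) (by nlinarith) hp0.le
    have h2 : ((1+δ)*t) ^ p = (1+δ)^p * t^p := Real.mul_rpow (by positivity) ht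
    have h3 : (1+δ)^p ≤ 1 + ε := by
      have he : (1+δ)^p = Real.exp (Real.log (1+δ) * p) := by
        rw [Real.rpow_def_of_pos (by linarith)]
      have hlogδ : Real.log (1+δ) ≤ δ := by
        have := Real.log_le_sub_one_of_pos (show (0:ℝ) < 1+δ by linarith)
        linarith
      have h4 : Real.exp (Real.log (1+δ) * p) ≤ Real.exp (δ * p) :=
        Real.exp_le_exp.2 (by nlinarith)
      have h5 : Real.exp (δ * p) = 1 + ε := by
        rw [hδdef, div_mul_cancel₀ _ (ne_of_gt hp0), Real.exp_log (by linarith)]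
      rw [he]; rw [h5] at h4; exact h4
    have h6 : (t+s)^p ≤ (1+ε)*t^p := by
      calc (t+s)^p ≤ (1+δ)^p * t^p := h2 ▸ h1
        _ ≤ (1+ε) * t^p := mul_le_mul_of_nonneg_right h3 (Real.rpow_nonneg ht p)
    have hKs : 0 ≤ (1/δ+1)^p * s^p :=
      mul_nonneg (Real.rpow_nonneg (by positivity) p) (Real.rpow_nonneg hs p)
    linarith
  · have hs0 : 0 < s := lt_of_le_of_lt (by positivity) hc
    have ht' : t + s ≤ (1/δ + 1) * s := by
      have h1 : t ≤ s / δ := by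
        rw [le_div_iff₀ hδ]; nlinarith
      have h2 : (1/δ + 1) * s = s/δ + s := by ring
      linarith
    have h1 : (t + s) ^ p ≤ ((1/δ+1)*s) ^ p :=
      Real.rpow_le_rpow (by linarith) ht' hp0.le
    have h2 : ((1/δ+1)*s)^p = (1/δ+1)^p * s^p := Real.mul_rpow (by positivity) hs
    have h3 : 0 ≤ (1+ε) * t^p := mul_nonneg (by linarith) (Real.rpow_nonneg ht p)
    calc (t+s)^p ≤ (1/δ+1)^p * s^p := h2 ▸ h1
      _ ≤ (1+ε)*t^p + (1/δ+1)^p * s^p := by linarith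

/-- Key pointwise inequality for the Brezis–Lieb lemma. -/
lemma BL.key_ineq {p ε : ℝ} (hp : 1 ≤ p) (hε : 0 < ε) :
    ∃ K : ℝ, 0 ≤ K ∧ ∀ a b : ℝ,
      |(|a| ^ p - |a - b| ^ p)| ≤ ε * |a - b| ^ p + K * |b| ^ p := by
  have hp0 : (0:ℝ) < p := lt_of_lt_of_le one_pos hp
  obtain ⟨K, hK, hA⟩ := BL.add_rpow_le hp hε
  refine ⟨K, hK, fun a b => ?_⟩
  set t := |a - b| with htdef
  set s := |b| with hsdef
  have ht : 0 ≤ t := abs_nonneg _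
  have hs : 0 ≤ s := abs_nonneg _
  have hat : |a| ≤ t + s := by
    calc |a| = |(a - b) + b| := by ring_nf
      _ ≤ |a - b| + |b| := abs_add_le _ _
  have hta : t ≤ |a| + s := by
    calc t = |a - b| := rfl
      _ ≤ |a| + |b| := abs_sub _ _
  rcases le_total t |a| with h | h
  · have h1 : t ^ p ≤ |a| ^ p := Real.rpow_le_rpow ht h hp0.le
    rw [abs_of_nonneg (by linarith)]
    have h2 : |a| ^ p ≤ (t + s) ^ p := Real.rpow_le_rpow (abs_nonneg a) hat hp0.le
    have h3 := hA t s ht hs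
    linarith
  · have h1 : |a| ^ p ≤ t ^ p := Real.rpow_le_rpow (abs_nonneg a) h hp0.le
    rw [abs_of_nonpos (by linarith)]
    have h2 : t ^ p ≤ (|a| + s) ^ p := Real.rpow_le_rpow ht hta hp0.le
    have h3 := hA |a| s (abs_nonneg a) hs
    have h4 : ε * |a| ^ p ≤ ε * t ^ p := mul_le_mul_of_nonneg_left h1 hε.le
    linarith

theorem brezis_lieb
    {N : ℕ} (hN : 1 ≤ N) (p C : ℝ) (hp : 1 ≤ p) (hC : 0 < C)
    (f : ℕ → EuclideanSpace ℝ (Fin N) → ℝ) (g : EuclideanSpace ℝ (Fin N) → ℝ)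
    (hmeas : ∀ n, AEStronglyMeasurable (f n)
      (volume : Measure (EuclideanSpace ℝ (Fin N))))
    (hae : ∀ᵐ x ∂(volume : Measure (EuclideanSpace ℝ (Fin N))),
      Tendsto (fun n => f n x) atTop (nhds (g x)))
    (hbound : ∀ n, eLpNorm (f n) (ENNReal.ofReal p)
      (volume : Measure (EuclideanSpace ℝ (Fin N))) ≤ ENNReal.ofReal C) :
    Tendsto (fun n => (∫ x, |f n x| ^ p) - ∫ x, |f n x - g x| ^ p)
      atTop (nhds (∫ x, |g x| ^ p)) := by
  classical
  set μ : Measure (EuclideanSpace ℝ (Fin N)) := volume with hμ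
  have hp0 : (0:ℝ) < p := lt_of_lt_of_le one_pos hp
  set q : ENNReal := ENNReal.ofReal p with hqdef
  have hq0 : q ≠ 0 := (ENNReal.ofReal_pos.mpr hp0).ne'
  have hqt : q ≠ ⊤ := ENNReal.ofReal_ne_top
  have hqr : q.toReal = p := ENNReal.toReal_ofReal hp0.le
  have hq1 : (1:ENNReal) ≤ q := by
    rw [hqdef, ← ENNReal.ofReal_one]
    exact ENNReal.ofReal_le_ofReal hp
  -- membership in Lp
  have hmem : ∀ n, MemLp (f n) q μ := by
    intro n
    exact ⟨hmeas n, lt_of_le_of_lt (hbound n) ENNReal.ofReal_lt_top⟩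
  have hgmeas : AEStronglyMeasurable g μ :=
    aestronglyMeasurable_of_tendsto_ae atTop hmeas hae
  have hgbound : eLpNorm g q μ ≤ ENNReal.ofReal C := by
    refine (Lp.eLpNorm_lim_le_liminf_eLpNorm hmeas g hae).trans ?_
    have : Filter.liminf (fun n => eLpNorm (f n) q μ) atTop ≤
        Filter.liminf (fun _ : ℕ => (ENNReal.ofReal C)) atTop :=
      Filter.liminf_le_liminf (Filter.Eventually.of_forall hbound)
    simpa using this
  have hgmem : MemLp g q μ := ⟨hgmeas, lt_of_le_of_lt hgbound ENNReal.ofReal_lt_top⟩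
  have hsubmem : ∀ n, MemLp (fun x => f n x - g x) q μ := fun n => (hmem n).sub hgmem
  -- integrability of the p-th powers
  have intF : ∀ n, Integrable (fun x => |f n x| ^ p) μ := fun n => by
    simpa [Real.norm_eq_abs, hqr] using (hmem n).integrable_norm_rpow hq0 hqt
  have intG : Integrable (fun x => |g x| ^ p) μ := by
    simpa [Real.norm_eq_abs, hqr] using hgmem.integrable_norm_rpow hq0 hqt
  have intFG : ∀ n, Integrable (fun x => |f n x - g x| ^ p) μ := fun n => by
    simpa [Real.norm_eq_abs, hqr] using (hsubmem n).integrable_norm_rpow hq0 hqt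
  -- uniform bound on ∫Δ^p
  set M : ℝ := (2*C) ^ p with hMdef
  have hM0 : 0 ≤ M := Real.rpow_nonneg (by linarith) p
  have hMb : ∀ n, (∫ x, |f n x - g x| ^ p ∂μ) ≤ M := by
    intro n
    have hsb : eLpNorm (fun x => f n x - g x) q μ ≤ ENNReal.ofReal (2*C) := by
      have h1 := eLpNorm_sub_le (hmeas n) hgmeas hq1 (μ := μ)
      have h2 : eLpNorm (f n) q μ + eLpNorm g q μ ≤
          ENNReal.ofReal C + ENNReal.ofReal C := add_le_add (hbound n) hgbound
      have h3 : ENNReal.ofReal C + ENNReal.ofReal C = ENNReal.ofReal (2*C) := by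
        rw [← ENNReal.ofReal_add hC.le hC.le]; ring_nf
      calc eLpNorm (fun x => f n x - g x) q μ
          ≤ eLpNorm (f n) q μ + eLpNorm g q μ := h1
        _ ≤ _ := h3 ▸ h2
    have heq := (hsubmem n).eLpNorm_eq_integral_rpow_norm hq0 hqt
    rw [heq] at hsb
    have hInonneg : 0 ≤ ∫ x, ‖f n x - g x‖ ^ q.toReal ∂μ := by
      apply integral_nonneg; intro x
      exact Real.rpow_nonneg (norm_nonneg _) _
    have h4 : (∫ x, ‖f n x - g x‖ ^ q.toReal ∂μ) ^ q.toReal⁻¹ ≤ 2*C := by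
      rwa [ENNReal.ofReal_le_ofReal_iff (by linarith)] at hsb
    have h5 : ((∫ x, ‖f n x - g x‖ ^ q.toReal ∂μ) ^ q.toReal⁻¹) ^ p ≤ (2*C) ^ p :=
      Real.rpow_le_rpow (Real.rpow_nonneg hInonneg _) h4 hp0.le
    have h6 : ((∫ x, ‖f n x - g x‖ ^ q.toReal ∂μ) ^ q.toReal⁻¹) ^ p =
        ∫ x, ‖f n x - g x‖ ^ q.toReal ∂μ := by
      rw [← Real.rpow_mul hInonneg, hqr, inv_mul_cancel₀ hp0.ne', Real.rpow_one]
    rw [h6] at h5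
    simpa [Real.norm_eq_abs, hqr, hMdef] using h5
  -- measurability of |·|^p combinations
  have contp : Continuous (fun x : ℝ => x ^ p) := Real.continuous_rpow_const hp0.le
  have measF : ∀ n, AEStronglyMeasurable (fun x => |f n x| ^ p) μ :=
    fun n => contp.comp_aestronglyMeasurable (by simpa [Real.norm_eq_abs] using (hmeas n).norm)
  have measG : AEStronglyMeasurable (fun x => |g x| ^ p) μ :=
    contp.comp_aestronglyMeasurable (by simpa [Real.norm_eq_abs] using hgmeas.norm)
  have measFG : ∀ n, AEStronglyMeasurable (fun x => |f n x - g x| ^ p) μ :=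
    fun n => contp.comp_aestronglyMeasurable
      (by simpa [Real.norm_eq_abs] using ((hmeas n).sub hgmeas).norm)
  -- integrability of h_n
  have hInt : ∀ n, Integrable
      (fun x => |f n x| ^ p - |f n x - g x| ^ p - |g x| ^ p) μ :=
    fun n => ((intF n).sub (intFG n)).sub intG
  have hsplit : ∀ n, (∫ x, (|f n x| ^ p - |f n x - g x| ^ p - |g x| ^ p) ∂μ) =
      (∫ x, |f n x| ^ p ∂μ) - (∫ x, |f n x - g x| ^ p ∂μ) - (∫ x, |g x| ^ p ∂μ) := by
    intro n
    rw [integral_sub (show Integrable (fun x => |f n x| ^ p - |f n x - g x| ^ p) μ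
        from (intF n).sub (intFG n)) intG, integral_sub (intF n) (intFG n)]
  -- main limit: ∫ h_n → 0
  have H : Tendsto (fun n => ∫ x, (|f n x| ^ p - |f n x - g x| ^ p - |g x| ^ p) ∂μ)
      atTop (nhds 0) := by
    rw [Metric.tendsto_atTop]
    intro ε' hε'
    set ε : ℝ := ε' / (2 * (M + 1)) with hεdef
    have hεpos : 0 < ε := by
      apply div_pos hε'; linarith
    obtain ⟨K, hK, hkey⟩ := BL.key_ineq hp hεpos
    set W : ℕ → EuclideanSpace ℝ (Fin N) → ℝ := fun n x =>
      max (|(|f n x| ^ p - |f n x - g x| ^ p - |g x| ^ p)| - ε * |f n x - g x| ^ p) 0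
      with hWdef
    have hWnonneg : ∀ n x, 0 ≤ W n x := fun n x => le_max_right _ _
    have hWle : ∀ n x, |(|f n x| ^ p - |f n x - g x| ^ p - |g x| ^ p)|
        ≤ W n x + ε * |f n x - g x| ^ p := by
      intro n x
      have := le_max_left (|(|f n x| ^ p - |f n x - g x| ^ p - |g x| ^ p)|
        - ε * |f n x - g x| ^ p) 0
      simp only [hWdef]
      linarith
    have hWbound : ∀ n x, W n x ≤ (K + 1) * |g x| ^ p := by
      intro n x
      have h1 := hkey (f n x) (g x)
      have hgp : 0 ≤ |g x| ^ p := Real.rpow_nonneg (abs_nonneg _) p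
      have h2 : |(|f n x| ^ p - |f n x - g x| ^ p - |g x| ^ p)|
          ≤ |(|f n x| ^ p - |f n x - g x| ^ p)| + |g x| ^ p := by
        have := abs_sub (|f n x| ^ p - |f n x - g x| ^ p) (|g x| ^ p)
        calc |(|f n x| ^ p - |f n x - g x| ^ p - |g x| ^ p)|
            ≤ |(|f n x| ^ p - |f n x - g x| ^ p)| + |(|g x| ^ p)| := this
          _ = |(|f n x| ^ p - |f n x - g x| ^ p)| + |g x| ^ p := by
              rw [abs_of_nonneg hgp]
      have h3 : |(|f n x| ^ p - |f n x - g x| ^ p - |g x| ^ p)|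
          - ε * |f n x - g x| ^ p ≤ (K + 1) * |g x| ^ p := by nlinarith
      exact max_le h3 (by nlinarith)
    have hWmeas : ∀ n, AEStronglyMeasurable (W n) μ := by
      intro n
      have h1 : AEStronglyMeasurable
          (fun x => |f n x| ^ p - |f n x - g x| ^ p - |g x| ^ p) μ :=
        ((measF n).sub (measFG n)).sub measG
      have h2 : AEStronglyMeasurable
          (fun x => |(|f n x| ^ p - |f n x - g x| ^ p - |g x| ^ p)|
            - ε * |f n x - g x| ^ p) μ := by
        refine AEStronglyMeasurable.sub ?_ ((measFG n).const_smul ε)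
        simpa [Real.norm_eq_abs] using h1.norm
      exact h2.aemeasurable.max aemeasurable_const |>.aestronglyMeasurable
    have hWtendsto : ∀ᵐ x ∂μ, Tendsto (fun n => W n x) atTop (nhds 0) := by
      filter_upwards [hae] with x hx
      have h1 : Tendsto (fun n => |f n x| ^ p) atTop (nhds (|g x| ^ p)) :=
        (hx.abs).rpow_const (Or.inr hp0.le)
      have h2 : Tendsto (fun n => |f n x - g x| ^ p) atTop (nhds 0) := by
        have : Tendsto (fun n => f n x - g x) atTop (nhds 0) := by
          simpa using hx.sub (tendsto_const_nhds (x := g x))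
        have h3 : Tendsto (fun n => |f n x - g x| ^ p) atTop (nhds (|(0:ℝ)| ^ p)) :=
          (this.abs).rpow_const (Or.inr hp0.le)
        simpa [Real.zero_rpow hp0.ne'] using h3
      have h4 : Tendsto (fun n => |f n x| ^ p - |f n x - g x| ^ p - |g x| ^ p)
          atTop (nhds 0) := by
        have := (h1.sub h2).sub (tendsto_const_nhds (x := |g x| ^ p))
        simpa using this
      have h5 : Tendsto (fun n =>
          |(|f n x| ^ p - |f n x - g x| ^ p - |g x| ^ p)| - ε * |f n x - g x| ^ p)
          atTop (nhds 0) := by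
        have := (h4.abs).sub (h2.const_mul ε)
        simpa using this
      have h6 := h5.max (tendsto_const_nhds (x := (0:ℝ)))
      simpa [hWdef] using h6
    have hWint : ∀ n, Integrable (W n) μ := by
      intro n
      refine Integrable.mono (intG.const_mul (K+1)) (hWmeas n) ?_
      refine Filter.Eventually.of_forall (fun x => ?_)
      have hgp : 0 ≤ |g x| ^ p := Real.rpow_nonneg (abs_nonneg _) p
      rw [Real.norm_eq_abs, Real.norm_eq_abs, abs_of_nonneg (hWnonneg n x),
        abs_of_nonneg (by positivity : (0:ℝ) ≤ (K+1) * |g x| ^ p)]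
      exact hWbound n x
    -- dominated convergence
    have hWlim : Tendsto (fun n => ∫ x, W n x ∂μ) atTop (nhds 0) := by
      have := tendsto_integral_of_dominated_convergence
        (fun x => (K + 1) * |g x| ^ p) hWmeas (intG.const_mul (K+1))
        (fun n => Filter.Eventually.of_forall (fun x => by
          rw [Real.norm_eq_abs, abs_of_nonneg (hWnonneg n x)]
          exact hWbound n x))
        (by simpa using hWtendsto)
      simpa using this
    rw [Metric.tendsto_atTop] at hWlim
    obtain ⟨Nn, hNn⟩ := hWlim (ε' / 2) (by linarith)
    refine ⟨Nn, fun n hn => ?_⟩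
    have hWn : |∫ x, W n x ∂μ| < ε' / 2 := by
      have := hNn n hn
      rwa [Real.dist_eq, sub_zero] at this
    have hWIn : (∫ x, W n x ∂μ) < ε' / 2 := (le_abs_self _).trans_lt hWn
    have hchain : |∫ x, (|f n x| ^ p - |f n x - g x| ^ p - |g x| ^ p) ∂μ|
        ≤ (∫ x, W n x ∂μ) + ε * (∫ x, |f n x - g x| ^ p ∂μ) := by
      have h1 : |∫ x, (|f n x| ^ p - |f n x - g x| ^ p - |g x| ^ p) ∂μ|
          ≤ ∫ x, |(|f n x| ^ p - |f n x - g x| ^ p - |g x| ^ p)| ∂μ := by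
        simpa [Real.norm_eq_abs] using
          norm_integral_le_integral_norm
            (fun x => |f n x| ^ p - |f n x - g x| ^ p - |g x| ^ p) (μ := μ)
      have h2 : (∫ x, |(|f n x| ^ p - |f n x - g x| ^ p - |g x| ^ p)| ∂μ)
          ≤ ∫ x, (W n x + ε * |f n x - g x| ^ p) ∂μ := by
        refine integral_mono (hInt n).abs ((hWint n).add ((intFG n).const_mul ε))
          (fun x => hWle n x)
      have h3 : (∫ x, (W n x + ε * |f n x - g x| ^ p) ∂μ)
          = (∫ x, W n x ∂μ) + ε * (∫ x, |f n x - g x| ^ p ∂μ) := by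
        rw [integral_add (hWint n) ((intFG n).const_mul ε), integral_const_mul]
      linarith
    have hεM : ε * (∫ x, |f n x - g x| ^ p ∂μ) ≤ ε' / 2 := by
      have h1 : ε * (∫ x, |f n x - g x| ^ p ∂μ) ≤ ε * M := by
        have hΔnn : 0 ≤ ∫ x, |f n x - g x| ^ p ∂μ :=
          integral_nonneg (fun x => Real.rpow_nonneg (abs_nonneg _) p)
        exact mul_le_mul_of_nonneg_left (hMb n) hεpos.le
      have h2 : ε * M ≤ ε' / 2 := by
        rw [hεdef]
        rw [div_mul_eq_mul_div, mul_comm]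
        rw [div_le_div_iff₀ (by linarith) (by norm_num)]
        nlinarith
      linarith
    rw [Real.dist_eq, sub_zero]
    calc |∫ x, (|f n x| ^ p - |f n x - g x| ^ p - |g x| ^ p) ∂μ|
        ≤ (∫ x, W n x ∂μ) + ε * (∫ x, |f n x - g x| ^ p ∂μ) := hchain
      _ < ε' / 2 + ε' / 2 := by linarith
      _ = ε' := by ring
  -- conclude
  have H2 := H.add_const (∫ x, |g x| ^ p ∂μ)
  rw [zero_add] at H2
  refine Tendsto.congr (fun n => ?_) H2
  rw [hsplit n]
  ring
end
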